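/- In the reversed reservoir sampling process on a stream segment of length n ≥ s, for any fixed final window size i with s ≤ i ≤ n, the induced random s-permutation χ(A_i) is uniformly distributed over all s-permutations of the i most recent elements; that is, any fixed s-permutation R of X[−i:] satisfies P(R = χ(A_i)) = (i−s)!/i!. -/

import Mathlib

open Finset

/-- Sample space of reversed reservoir sampling restricted to ages `1..i` with
target sample size `s`: a uniformly random permutation assigning slots to the
`s` most recent ages, and, for each age `j ∈ {s+1,…,i}`, an optional slot
(`some ℓ` if the age is sampled into slot `ℓ`, `none` otherwise). -/
abbrev RROmega (s i : ℕ) : Type :=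
  Equiv.Perm (Fin s) × ((Finset.Icc (s + 1) i : Finset ℕ) → Option (Fin s))

/-- Probability density of an outcome: the permutation is uniform (probability
`1/s!`), and independently each age `j > s` is sampled into a given slot with
probability `(s/j)·(1/s) = 1/j`, and left unsampled with probability `1 - s/j`. -/
noncomputable def RRdensity (s i : ℕ) (ω : RROmega s i) : ℝ :=
  (1 / (Nat.factorial s : ℝ)) *
    ∏ j : (Finset.Icc (s + 1) i : Finset ℕ),
      (if (ω.2 j).isSome then 1 / ((j : ℕ) : ℝ) else 1 - (s : ℝ) / ((j : ℕ) : ℝ))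

/-- `RRchi s i ω ℓ` is the oldest age assigned to slot `ℓ`: among the base age
`π.symm ℓ ∈ {1,…,s}` and all sampled ages `j > s` mapped to slot `ℓ`. This is
the `s`-permutation `χ(A_i) = (ν(1), …, ν(s))` induced by the sampling outcome. -/
noncomputable def RRchi (s i : ℕ) (ω : RROmega s i) (ℓ : Fin s) : ℕ :=
  Finset.max'
    (insert ((ω.1.symm ℓ : ℕ) + 1)
      (Finset.image (fun j : (Finset.Icc (s + 1) i : Finset ℕ) => (j : ℕ))
        (Finset.univ.filter
          (fun j : (Finset.Icc (s + 1) i : Finset ℕ) => ω.2 j = some ℓ))))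
    (Finset.insert_nonempty _ _)

namespace RRaux

lemma max'_congr {S T : Finset ℕ} (h : S = T) (hS : S.Nonempty) (hT : T.Nonempty) :
    S.max' hS = T.max' hT := by subst h; rfl

/-- The slot-content set underlying `RRchi`. -/
noncomputable def slotSet (s i : ℕ) (ω : RROmega s i) (ℓ : Fin s) : Finset ℕ :=
  insert ((ω.1.symm ℓ : ℕ) + 1)
    (Finset.image (fun j : (Finset.Icc (s + 1) i : Finset ℕ) => (j : ℕ))
      (Finset.univ.filter
        (fun j : (Finset.Icc (s + 1) i : Finset ℕ) => ω.2 j = some ℓ)))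

lemma RRchi_eq (s i : ℕ) (ω : RROmega s i) (ℓ : Fin s) :
    RRchi s i ω ℓ = (slotSet s i ω ℓ).max' (Finset.insert_nonempty _ _) := rfl

lemma mem_slotSet_iff (s i : ℕ) (ω : RROmega s i) (ℓ : Fin s) (n : ℕ) :
    n ∈ slotSet s i ω ℓ ↔
      n = (ω.1.symm ℓ : ℕ) + 1 ∨ ∃ h : n ∈ Finset.Icc (s+1) i, ω.2 ⟨n, h⟩ = some ℓ := by
  simp only [slotSet, Finset.mem_insert, Finset.mem_image, Finset.mem_filter,
    Finset.mem_univ, true_and]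
  constructor
  · rintro (h | ⟨j, hj, rfl⟩)
    · exact Or.inl h
    · exact Or.inr ⟨j.2, by rwa [Subtype.coe_eta]⟩
  · rintro (h | ⟨h, hh⟩)
    · exact Or.inl h
    · exact Or.inr ⟨⟨n, h⟩, hh, rfl⟩

lemma slotSet_subset (s i : ℕ) (hs : 1 ≤ s) (hsi : s ≤ i) (ω : RROmega s i) (ℓ : Fin s) :
    ∀ n ∈ slotSet s i ω ℓ, n ∈ Finset.Icc 1 i := by
  intro n hn
  rw [mem_slotSet_iff] at hn
  rcases hn with h | ⟨h, -⟩
  · have := (ω.1.symm ℓ).2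
    simp only [Finset.mem_Icc]; omega
  · simp only [Finset.mem_Icc] at h ⊢; omega

lemma RRchi_mem (s i : ℕ) (hs : 1 ≤ s) (hsi : s ≤ i) (ω : RROmega s i) (ℓ : Fin s) :
    RRchi s i ω ℓ ∈ Finset.Icc 1 i :=
  slotSet_subset s i hs hsi ω ℓ _ (Finset.max'_mem _ _)

lemma RRchi_injective (s i : ℕ) (ω : RROmega s i) : Function.Injective (RRchi s i ω) := by
  intro ℓ ℓ' h
  have h1 : RRchi s i ω ℓ ∈ slotSet s i ω ℓ := Finset.max'_mem _ _
  have h2 : RRchi s i ω ℓ' ∈ slotSet s i ω ℓ' := Finset.max'_mem _ _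
  rw [h] at h1
  rw [mem_slotSet_iff] at h1 h2
  rcases h1 with h1 | ⟨m1, e1⟩ <;> rcases h2 with h2 | ⟨m2, e2⟩
  · have : (ω.1.symm ℓ : ℕ) = (ω.1.symm ℓ' : ℕ) := by omega
    have : ω.1.symm ℓ = ω.1.symm ℓ' := Fin.ext this
    exact ω.1.symm.injective this
  · have hle := (ω.1.symm ℓ).2
    simp only [Finset.mem_Icc] at m2; omega
  · have hle := (ω.1.symm ℓ').2
    simp only [Finset.mem_Icc] at m1; omega
  · have : (⟨RRchi s i ω ℓ', m1⟩ : (Finset.Icc (s+1) i : Finset ℕ)) = ⟨RRchi s i ω ℓ', m2⟩ := rfl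
    rw [this, e2] at e1
    exact (Option.some_injective _ e1).symm

end RRaux

namespace RRaux

lemma mem_step {s i j : ℕ} (hj : j ∈ Finset.Icc (s+1) i) : j ∈ Finset.Icc (s+1) (i+1) := by
  simp only [Finset.mem_Icc] at *; omega

lemma mem_top {s i : ℕ} (hsi : s ≤ i) : i + 1 ∈ Finset.Icc (s+1) (i+1) := by
  simp only [Finset.mem_Icc]; omega

/-- Extend an outcome on ages `s+1..i` by a decision `o` for age `i+1`. -/
def Eext (s i : ℕ) (g : (Finset.Icc (s+1) i : Finset ℕ) → Option (Fin s)) (o : Option (Fin s)) :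
    (Finset.Icc (s+1) (i+1) : Finset ℕ) → Option (Fin s) :=
  fun j => if h : (j : ℕ) = i + 1 then o else
    g ⟨j, by have := j.2; simp only [Finset.mem_Icc] at *; omega⟩

lemma Eext_top {s i : ℕ} (hsi : s ≤ i) (g) (o) : Eext s i g o ⟨i+1, mem_top hsi⟩ = o := by
  simp [Eext]

lemma Eext_of_ne {s i : ℕ} (g) (o) (j : (Finset.Icc (s+1) (i+1) : Finset ℕ))
    (h : (j : ℕ) ≠ i + 1) (hj : (j : ℕ) ∈ Finset.Icc (s+1) i) :
    Eext s i g o j = g ⟨j, hj⟩ := by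
  simp [Eext, h]

lemma Eext_bij {s i : ℕ} (hsi : s ≤ i) :
    Function.Bijective
      (fun p : ((Finset.Icc (s+1) i : Finset ℕ) → Option (Fin s)) × Option (Fin s) =>
        Eext s i p.1 p.2) := by
  constructor
  · rintro ⟨g, o⟩ ⟨g', o'⟩ h
    simp only [Prod.mk.injEq]
    constructor
    · funext j
      have hj := j.2
      have hne : (j : ℕ) ≠ i + 1 := by simp only [Finset.mem_Icc] at hj; omega
      have := congrFun h ⟨j, mem_step j.2⟩
      simpa [Eext, hne] using this
    · have := congrFun h ⟨i+1, mem_top hsi⟩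
      simpa [Eext] using this
  · intro f
    refine ⟨⟨fun j => f ⟨j, mem_step j.2⟩, f ⟨i+1, mem_top hsi⟩⟩, ?_⟩
    funext j
    by_cases h : (j : ℕ) = i + 1
    · simp only [Eext, h, dif_pos]
      congr 1
      exact Subtype.ext h.symm
    · simp only [Eext]
      rw [dif_neg h]

lemma Icc_succ (s i : ℕ) (hsi : s ≤ i) :
    Finset.Icc (s+1) (i+1) = insert (i+1) (Finset.Icc (s+1) i) := by
  ext x; simp only [Finset.mem_Icc, Finset.mem_insert]; omega

lemma density_succ {s i : ℕ} (hsi : s ≤ i) (π : Equiv.Perm (Fin s))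
    (g : (Finset.Icc (s+1) i : Finset ℕ) → Option (Fin s)) (o : Option (Fin s)) :
    RRdensity s (i+1) (π, Eext s i g o)
      = RRdensity s i (π, g) *
        (if o.isSome then 1 / ((i+1 : ℕ) : ℝ) else 1 - (s : ℝ) / ((i+1 : ℕ) : ℝ)) := by
  set F : ℕ → ℝ := fun n =>
    if h : n ∈ Finset.Icc (s+1) (i+1) then
      (if (Eext s i g o ⟨n, h⟩).isSome then 1 / (n : ℝ) else 1 - (s : ℝ) / (n : ℝ))
    else 1 with hF
  have key : ∏ j : (Finset.Icc (s+1) (i+1) : Finset ℕ),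
      (if ((Eext s i g o) j).isSome then 1 / ((j : ℕ) : ℝ) else 1 - (s : ℝ) / ((j : ℕ) : ℝ))
      = ∏ n ∈ Finset.Icc (s+1) (i+1), F n := by
    rw [Finset.prod_coe_sort_eq_attach, ← Finset.prod_attach _ F]
    apply Finset.prod_congr rfl
    intro j _
    simp only [hF, j.2, dif_pos]
  have key2 : ∏ j : (Finset.Icc (s+1) i : Finset ℕ),
      (if (g j).isSome then 1 / ((j : ℕ) : ℝ) else 1 - (s : ℝ) / ((j : ℕ) : ℝ))
      = ∏ n ∈ Finset.Icc (s+1) i, F n := by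
    rw [Finset.prod_coe_sort_eq_attach, ← Finset.prod_attach _ F]
    apply Finset.prod_congr rfl
    intro j _
    have hj := j.2
    have hne : (j : ℕ) ≠ i + 1 := by simp only [Finset.mem_Icc] at hj; omega
    simp only [hF, mem_step j.2, dif_pos]
    rw [Eext_of_ne g o ⟨(j : ℕ), mem_step hj⟩ hne hj, Subtype.coe_eta]
  have hnot : (i+1) ∉ Finset.Icc (s+1) i := by simp only [Finset.mem_Icc]; omega
  have hFi : F (i+1) = (if o.isSome then 1 / ((i+1:ℕ) : ℝ) else 1 - (s:ℝ)/((i+1:ℕ):ℝ)) := by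
    simp only [hF, mem_top hsi, dif_pos, Eext_top hsi]
  unfold RRdensity
  rw [key, key2, Icc_succ s i hsi, Finset.prod_insert hnot, hFi]
  ring

end RRaux

namespace RRaux

lemma slotSet_succ {s i : ℕ} (hsi : s ≤ i) (π : Equiv.Perm (Fin s)) (g) (o) (ℓ : Fin s) :
    slotSet s (i+1) (π, Eext s i g o) ℓ =
      if o = some ℓ then insert (i+1) (slotSet s i (π, g) ℓ) else slotSet s i (π, g) ℓ := by
  by_cases ho : o = some ℓ
  · subst ho
    rw [if_pos rfl]
    ext n
    rw [mem_slotSet_iff]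
    simp only [Finset.mem_insert, mem_slotSet_iff]
    constructor
    · rintro (h | ⟨h, hh⟩)
      · exact Or.inr (Or.inl h)
      · by_cases hn : n = i + 1
        · exact Or.inl hn
        · have hn' : n ∈ Finset.Icc (s+1) i := by
            simp only [Finset.mem_Icc] at h ⊢; omega
          refine Or.inr (Or.inr ⟨hn', ?_⟩)
          rwa [Eext_of_ne g (some ℓ) ⟨n, h⟩ hn hn'] at hh
    · rintro (h | h | ⟨h, hh⟩)
      · subst h
        exact Or.inr ⟨mem_top hsi, Eext_top hsi g (some ℓ)⟩
      · exact Or.inl h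
      · have hn : n ≠ i + 1 := by simp only [Finset.mem_Icc] at h; omega
        refine Or.inr ⟨mem_step h, ?_⟩
        rwa [Eext_of_ne g (some ℓ) ⟨n, mem_step h⟩ hn h]
  · rw [if_neg ho]
    ext n
    rw [mem_slotSet_iff, mem_slotSet_iff]
    constructor
    · rintro (h | ⟨h, hh⟩)
      · exact Or.inl h
      · by_cases hn : n = i + 1
        · exfalso
          subst hn
          exact ho (by simpa [Eext] using hh)
        · have hn' : n ∈ Finset.Icc (s+1) i := by
            simp only [Finset.mem_Icc] at h ⊢; omega
          refine Or.inr ⟨hn', ?_⟩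
          have hh' : Eext s i g o ⟨n, h⟩ = some ℓ := hh
          rwa [Eext_of_ne g o ⟨n, h⟩ hn hn'] at hh'
    · rintro (h | ⟨h, hh⟩)
      · exact Or.inl h
      · have hn : n ≠ i + 1 := by simp only [Finset.mem_Icc] at h; omega
        refine Or.inr ⟨mem_step h, ?_⟩
        show Eext s i g o ⟨n, mem_step h⟩ = some ℓ
        rwa [Eext_of_ne g o ⟨n, mem_step h⟩ hn h]

lemma chi_succ {s i : ℕ} (hs : 1 ≤ s) (hsi : s ≤ i) (π : Equiv.Perm (Fin s)) (g) (o) (ℓ : Fin s) :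
    RRchi s (i+1) (π, Eext s i g o) ℓ
      = if o = some ℓ then i + 1 else RRchi s i (π, g) ℓ := by
  rw [RRchi_eq]
  by_cases ho : o = some ℓ
  · rw [if_pos ho]
    have hset := slotSet_succ hsi π g o ℓ
    rw [if_pos ho] at hset
    refine (max'_congr hset _ ⟨i+1, Finset.mem_insert_self _ _⟩).trans ?_
    apply le_antisymm
    · apply Finset.max'_le
      intro y hy
      rcases Finset.mem_insert.mp hy with h | h
      · omega
      · have := slotSet_subset s i hs hsi (π, g) ℓ y h
        simp only [Finset.mem_Icc] at this; omega
    · exact Finset.le_max' _ _ (Finset.mem_insert_self _ _)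
  · rw [if_neg ho]
    have hset := slotSet_succ hsi π g o ℓ
    rw [if_neg ho] at hset
    refine (max'_congr hset _ (Finset.insert_nonempty _ _)).trans ?_
    rfl

end RRaux

namespace RRaux

lemma base (s : ℕ) (hs : 1 ≤ s) (R : Fin s → ℕ) (hinj : Function.Injective R)
    (hmem : ∀ ℓ, R ℓ ∈ Finset.Icc 1 s) :
    ∑ ω : RROmega s s, (if RRchi s s ω = R then RRdensity s s ω else 0)
      = (Nat.factorial (s - s) : ℝ) / (Nat.factorial s) := by
  haveI hie : IsEmpty ((Finset.Icc (s+1) s : Finset ℕ)) :=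
    ⟨fun j => by have := j.2; simp only [Finset.mem_Icc] at this; omega⟩
  have hdens : ∀ ω : RROmega s s, RRdensity s s ω = 1 / (Nat.factorial s : ℝ) := by
    intro ω
    unfold RRdensity
    rw [Finset.univ_eq_empty, Finset.prod_empty, mul_one]
  have hchi : ∀ (ω : RROmega s s) (ℓ : Fin s), RRchi s s ω ℓ = (ω.1.symm ℓ : ℕ) + 1 := by
    intro ω ℓ
    rw [RRchi_eq]
    have hset : slotSet s s ω ℓ = {(ω.1.symm ℓ : ℕ) + 1} := by
      unfold slotSet
      rw [Finset.univ_eq_empty, Finset.filter_empty, Finset.image_empty]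
      rfl
    refine (max'_congr hset _ (Finset.singleton_nonempty _)).trans ?_
    exact Finset.max'_singleton _
  set σ : Fin s → Fin s := fun ℓ =>
    ⟨R ℓ - 1, by have := hmem ℓ; simp only [Finset.mem_Icc] at this; omega⟩ with hσ
  have hσinj : Function.Injective σ := by
    intro a b hab
    apply hinj
    have h1 := hmem a; have h2 := hmem b
    simp only [Finset.mem_Icc] at h1 h2
    have : R a - 1 = R b - 1 := congrArg Fin.val hab
    omega
  have hσbij : Function.Bijective σ := Finite.injective_iff_bijective.mp hσinj
  set π₀ : Equiv.Perm (Fin s) := (Equiv.ofBijective σ hσbij).symm with hπ₀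
  have hcond : ∀ ω : RROmega s s, (RRchi s s ω = R ↔ ω.1 = π₀) := by
    intro ω
    constructor
    · intro h
      have hpt : ∀ ℓ, ω.1.symm ℓ = σ ℓ := by
        intro ℓ
        have hℓ := congrFun h ℓ
        rw [hchi] at hℓ
        apply Fin.ext
        have hm := hmem ℓ
        simp only [Finset.mem_Icc] at hm
        simp only [hσ]
        omega
      have hsy : ω.1.symm = Equiv.ofBijective σ hσbij := Equiv.ext hpt
      have := congrArg Equiv.symm hsy
      rwa [Equiv.symm_symm] at this
    · intro h
      funext ℓ
      rw [hchi]
      have : ω.1.symm ℓ = σ ℓ := by rw [h, hπ₀, Equiv.symm_symm]; rfl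
      rw [this]
      have hm := hmem ℓ
      simp only [Finset.mem_Icc] at hm
      simp only [hσ]
      omega
  have hstep : ∑ ω : RROmega s s, (if RRchi s s ω = R then RRdensity s s ω else 0)
      = ∑ ω : RROmega s s, (if ω.1 = π₀ then 1 / (Nat.factorial s : ℝ) else 0) := by
    apply Finset.sum_congr rfl
    intro ω _
    rw [hdens]
    by_cases h : RRchi s s ω = R
    · rw [if_pos h, if_pos ((hcond ω).mp h)]
    · rw [if_neg h, if_neg (fun hh => h ((hcond ω).mpr hh))]
  rw [hstep, Fintype.sum_prod_type]
  have hsum : ∀ π : Equiv.Perm (Fin s),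
      (∑ _f : ((Finset.Icc (s+1) s : Finset ℕ) → Option (Fin s)),
        (if π = π₀ then 1 / (Nat.factorial s : ℝ) else 0))
      = (if π = π₀ then 1 / (Nat.factorial s : ℝ) else 0) := by
    intro π
    rw [Fintype.sum_unique]
  simp only [hsum]
  rw [Finset.sum_ite_eq' Finset.univ π₀ (fun _ => 1 / (Nat.factorial s : ℝ)),
    if_pos (Finset.mem_univ _)]
  simp [Nat.sub_self]

end RRaux

namespace RRaux

lemma step (s i : ℕ) (hs : 1 ≤ s) (hsi : s ≤ i)
    (IH : ∀ R : Fin s → ℕ, Function.Injective R → (∀ ℓ, R ℓ ∈ Finset.Icc 1 i) →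
      ∑ ω : RROmega s i, (if RRchi s i ω = R then RRdensity s i ω else 0)
        = (Nat.factorial (i - s) : ℝ) / (Nat.factorial i))
    (R : Fin s → ℕ) (hinj : Function.Injective R)
    (hmem : ∀ ℓ, R ℓ ∈ Finset.Icc 1 (i+1)) :
    ∑ ω : RROmega s (i+1), (if RRchi s (i+1) ω = R then RRdensity s (i+1) ω else 0)
      = (Nat.factorial (i + 1 - s) : ℝ) / (Nat.factorial (i+1)) := by
  classical
  set wn : ℝ := 1 - (s : ℝ) / ((i+1 : ℕ) : ℝ) with hwn
  set ws : ℝ := 1 / ((i+1 : ℕ) : ℝ) with hws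
  -- condition for the "some ℓ₀" case
  set C : Fin s → RROmega s i → Prop := fun ℓ₀ ω =>
    (fun ℓ => if ℓ = ℓ₀ then i + 1 else RRchi s i ω ℓ) = R with hC
  have hre : ∑ ω : RROmega s (i+1), (if RRchi s (i+1) ω = R then RRdensity s (i+1) ω else 0)
      = (∑ ω : RROmega s i, (if RRchi s i ω = R then RRdensity s i ω else 0)) * wn
        + ∑ ℓ₀ : Fin s,
            (∑ ω : RROmega s i, (if C ℓ₀ ω then RRdensity s i ω else 0)) * ws := by
    rw [Fintype.sum_prod_type]
    have row : ∀ π : Equiv.Perm (Fin s),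
        (∑ f : ((Finset.Icc (s+1) (i+1) : Finset ℕ) → Option (Fin s)),
          (if RRchi s (i+1) (π, f) = R then RRdensity s (i+1) (π, f) else 0))
        = ∑ g : ((Finset.Icc (s+1) i : Finset ℕ) → Option (Fin s)),
            ((if RRchi s i (π, g) = R then RRdensity s i (π, g) else 0) * wn
              + ∑ ℓ₀ : Fin s, (if C ℓ₀ (π, g) then RRdensity s i (π, g) else 0) * ws) := by
      intro π
      rw [← Fintype.sum_bijective _ (Eext_bij hsi)
        (fun p : ((Finset.Icc (s+1) i : Finset ℕ) → Option (Fin s)) × Option (Fin s) =>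
          if RRchi s (i+1) (π, Eext s i p.1 p.2) = R
          then RRdensity s (i+1) (π, Eext s i p.1 p.2) else 0) _ (fun p => rfl)]
      rw [Fintype.sum_prod_type]
      apply Finset.sum_congr rfl
      intro g _
      rw [Fintype.sum_option]
      congr 1
      · have hchi : RRchi s (i+1) (π, Eext s i g none) = RRchi s i (π, g) := by
          funext ℓ
          rw [chi_succ hs hsi]
          simp
        rw [hchi, density_succ hsi π g none]
        simp only [Option.isSome_none, Bool.false_eq_true, if_false]
        by_cases h : RRchi s i (π, g) = R
        · rw [if_pos h, if_pos h]
        · rw [if_neg h, if_neg h, zero_mul]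
      · apply Finset.sum_congr rfl
        intro ℓ₀ _
        have hchi : RRchi s (i+1) (π, Eext s i g (some ℓ₀))
            = fun ℓ => if ℓ = ℓ₀ then i+1 else RRchi s i (π, g) ℓ := by
          funext ℓ
          rw [chi_succ hs hsi]
          by_cases h : ℓ = ℓ₀
          · rw [if_pos (by rw [h]), if_pos h]
          · rw [if_neg (fun hh => h (Option.some_injective _ hh).symm), if_neg h]
        rw [hchi, density_succ hsi π g (some ℓ₀)]
        simp only [Option.isSome_some, if_true]
        by_cases h : C ℓ₀ (π, g)
        · rw [if_pos h, if_pos h]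
        · rw [if_neg h, if_neg h, zero_mul]
    simp only [row]
    have collapse1 : (∑ ω : RROmega s i, (if RRchi s i ω = R then RRdensity s i ω else 0))
        = ∑ π : Equiv.Perm (Fin s), ∑ g : ((Finset.Icc (s+1) i : Finset ℕ) → Option (Fin s)),
            (if RRchi s i (π, g) = R then RRdensity s i (π, g) else 0) :=
      Fintype.sum_prod_type _
    have collapse2 : ∀ ℓ₀ : Fin s,
        (∑ ω : RROmega s i, (if C ℓ₀ ω then RRdensity s i ω else 0))
        = ∑ π : Equiv.Perm (Fin s), ∑ g : ((Finset.Icc (s+1) i : Finset ℕ) → Option (Fin s)),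
            (if C ℓ₀ (π, g) then RRdensity s i (π, g) else 0) :=
      fun ℓ₀ => Fintype.sum_prod_type _
    simp only [collapse1, collapse2, Finset.sum_add_distrib, ← Finset.sum_mul]
    congr 1
    congr 1
    have hswap : ∀ π : Equiv.Perm (Fin s),
        (∑ g : ((Finset.Icc (s+1) i : Finset ℕ) → Option (Fin s)), ∑ ℓ₀ : Fin s,
          (if C ℓ₀ (π, g) then RRdensity s i (π, g) else 0))
        = ∑ ℓ₀ : Fin s, ∑ g : ((Finset.Icc (s+1) i : Finset ℕ) → Option (Fin s)),
          (if C ℓ₀ (π, g) then RRdensity s i (π, g) else 0) := fun π => Finset.sum_comm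
    simp only [hswap]
    rw [Finset.sum_comm]
  rw [hre]
  have hi1 : ((i:ℝ) + 1) ≠ 0 := by positivity
  have hif : ((Nat.factorial i : ℕ) : ℝ) ≠ 0 := Nat.cast_ne_zero.mpr (Nat.factorial_ne_zero i)
  have hsub : i + 1 - s = (i - s) + 1 := by omega
  have hcast : ((i - s : ℕ) : ℝ) = (i:ℝ) - (s:ℝ) := by
    rw [Nat.cast_sub hsi]
  by_cases hR : ∃ ℓ₀, R ℓ₀ = i + 1
  · obtain ⟨ℓ₀, hℓ₀⟩ := hR
    have hz1 : (∑ ω : RROmega s i, (if RRchi s i ω = R then RRdensity s i ω else 0)) = 0 := by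
      apply Finset.sum_eq_zero
      intro ω _
      rw [if_neg]
      intro hc
      have h1 := congrFun hc ℓ₀
      have h2 := RRchi_mem s i hs hsi ω ℓ₀
      rw [h1, hℓ₀] at h2
      simp only [Finset.mem_Icc] at h2
      omega
    rw [hz1, zero_mul, zero_add]
    have hothers : ∀ ℓ₁ : Fin s, ℓ₁ ≠ ℓ₀ →
        (∑ ω : RROmega s i, (if C ℓ₁ ω then RRdensity s i ω else 0)) * ws = 0 := by
      intro ℓ₁ hne
      have hz : (∑ ω : RROmega s i, (if C ℓ₁ ω then RRdensity s i ω else 0)) = 0 := by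
        apply Finset.sum_eq_zero
        intro ω _
        rw [if_neg]
        intro hc
        have hc' : (fun ℓ => if ℓ = ℓ₁ then i + 1 else RRchi s i ω ℓ) = R := hc
        have h1 := congrFun hc' ℓ₀
        rw [if_neg (fun h => hne h.symm)] at h1
        have h2 := RRchi_mem s i hs hsi ω ℓ₀
        rw [h1, hℓ₀] at h2
        simp only [Finset.mem_Icc] at h2
        omega
      rw [hz, zero_mul]
    rw [Fintype.sum_eq_single ℓ₀ hothers]
    have hmain : (∑ ω : RROmega s i, (if C ℓ₀ ω then RRdensity s i ω else 0))
        = ((i:ℝ) - (s:ℝ) + 1) * ((Nat.factorial (i - s) : ℝ) / (Nat.factorial i)) := by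
      have hpoint : ∀ ω : RROmega s i, (if C ℓ₀ ω then RRdensity s i ω else 0)
          = ∑ v ∈ Finset.Icc 1 i,
              (if RRchi s i ω = Function.update R ℓ₀ v then RRdensity s i ω else 0) := by
        intro ω
        have hiff : ∀ v : ℕ, (RRchi s i ω = Function.update R ℓ₀ v) ↔
            (v = RRchi s i ω ℓ₀ ∧ ∀ ℓ, ℓ ≠ ℓ₀ → RRchi s i ω ℓ = R ℓ) := by
          intro v
          constructor
          · intro h
            refine ⟨?_, ?_⟩
            · have := congrFun h ℓ₀
              rw [Function.update_self] at this
              exact this.symm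
            · intro ℓ hℓ
              have := congrFun h ℓ
              rwa [Function.update_of_ne hℓ] at this
          · rintro ⟨hv, hall⟩
            funext ℓ
            by_cases hℓ : ℓ = ℓ₀
            · subst hℓ
              rw [Function.update_self, hv]
            · rw [Function.update_of_ne hℓ]
              exact hall ℓ hℓ
        have hCiff : C ℓ₀ ω ↔ (∀ ℓ, ℓ ≠ ℓ₀ → RRchi s i ω ℓ = R ℓ) := by
          constructor
          · intro h ℓ hℓ
            have h' : (fun ℓ => if ℓ = ℓ₀ then i + 1 else RRchi s i ω ℓ) = R := h
            have := congrFun h' ℓ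
            rwa [if_neg hℓ] at this
          · intro h
            show (fun ℓ => if ℓ = ℓ₀ then i + 1 else RRchi s i ω ℓ) = R
            funext ℓ
            by_cases hℓ : ℓ = ℓ₀
            · rw [if_pos hℓ, hℓ, hℓ₀]
            · rw [if_neg hℓ]
              exact h ℓ hℓ
        by_cases hcc : ∀ ℓ, ℓ ≠ ℓ₀ → RRchi s i ω ℓ = R ℓ
        · rw [if_pos (hCiff.mpr hcc)]
          have hv : ∀ v : ℕ, (RRchi s i ω = Function.update R ℓ₀ v) ↔ v = RRchi s i ω ℓ₀ :=
            fun v => (hiff v).trans ⟨fun h => h.1, fun h => ⟨h, hcc⟩⟩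
          symm
          calc ∑ v ∈ Finset.Icc 1 i,
                (if RRchi s i ω = Function.update R ℓ₀ v then RRdensity s i ω else 0)
              = ∑ v ∈ Finset.Icc 1 i,
                (if v = RRchi s i ω ℓ₀ then RRdensity s i ω else 0) := by
                apply Finset.sum_congr rfl
                intro v _
                by_cases h : v = RRchi s i ω ℓ₀
                · rw [if_pos ((hv v).mpr h), if_pos h]
                · rw [if_neg (fun hh => h ((hv v).mp hh)), if_neg h]
            _ = RRdensity s i ω := by
                rw [Finset.sum_ite_eq' (Finset.Icc 1 i) (RRchi s i ω ℓ₀),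
                  if_pos (RRchi_mem s i hs hsi ω ℓ₀)]
        · rw [if_neg (fun h => hcc (hCiff.mp h))]
          symm
          apply Finset.sum_eq_zero
          intro v _
          rw [if_neg (fun h => hcc ((hiff v).mp h).2)]
      rw [Finset.sum_congr rfl (fun ω _ => hpoint ω), Finset.sum_comm]
      have hval : ∀ v ∈ Finset.Icc 1 i,
          (∑ ω : RROmega s i,
            (if RRchi s i ω = Function.update R ℓ₀ v then RRdensity s i ω else 0))
          = if v ∈ Finset.image R (Finset.univ.erase ℓ₀) then 0
            else (Nat.factorial (i - s) : ℝ) / (Nat.factorial i) := by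
        intro v hv
        by_cases hvB : v ∈ Finset.image R (Finset.univ.erase ℓ₀)
        · rw [if_pos hvB]
          obtain ⟨ℓ₁, hℓ₁mem, hℓ₁⟩ := Finset.mem_image.mp hvB
          have hℓ₁ne : ℓ₁ ≠ ℓ₀ := (Finset.mem_erase.mp hℓ₁mem).1
          apply Finset.sum_eq_zero
          intro ω _
          rw [if_neg]
          intro h
          have e1 := congrFun h ℓ₁
          rw [Function.update_of_ne hℓ₁ne, hℓ₁] at e1
          have e2 := congrFun h ℓ₀
          rw [Function.update_self] at e2
          exact hℓ₁ne (RRchi_injective s i ω (e1.trans e2.symm))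
        · rw [if_neg hvB]
          apply IH
          · intro a b hab
            by_cases ha : a = ℓ₀ <;> by_cases hb : b = ℓ₀
            · rw [ha, hb]
            · exfalso
              apply hvB
              rw [ha] at hab
              rw [Function.update_self, Function.update_of_ne hb] at hab
              exact Finset.mem_image.mpr
                ⟨b, Finset.mem_erase.mpr ⟨hb, Finset.mem_univ _⟩, hab.symm⟩
            · exfalso
              apply hvB
              rw [hb] at hab
              rw [Function.update_self, Function.update_of_ne ha] at hab
              exact Finset.mem_image.mpr
                ⟨a, Finset.mem_erase.mpr ⟨ha, Finset.mem_univ _⟩, hab⟩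
            · rw [Function.update_of_ne ha, Function.update_of_ne hb] at hab
              exact hinj hab
          · intro ℓ
            by_cases hℓ : ℓ = ℓ₀
            · subst hℓ
              rwa [Function.update_self]
            · rw [Function.update_of_ne hℓ]
              have h1 := hmem ℓ
              have h2 : R ℓ ≠ i + 1 := fun h => hℓ (hinj (h.trans hℓ₀.symm))
              simp only [Finset.mem_Icc] at h1 ⊢
              omega
      rw [Finset.sum_congr rfl hval, Finset.sum_ite, Finset.sum_const_zero, zero_add,
        Finset.sum_const, nsmul_eq_mul]
      have hBsub : Finset.image R (Finset.univ.erase ℓ₀) ⊆ Finset.Icc 1 i := by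
        intro v hv
        obtain ⟨ℓ₁, hm, rfl⟩ := Finset.mem_image.mp hv
        have hne := (Finset.mem_erase.mp hm).1
        have h1 := hmem ℓ₁
        have h2 : R ℓ₁ ≠ i + 1 := fun h => hne (hinj (h.trans hℓ₀.symm))
        simp only [Finset.mem_Icc] at h1 ⊢
        omega
      have hfilter : (Finset.Icc 1 i).filter
            (fun v => ¬ v ∈ Finset.image R (Finset.univ.erase ℓ₀))
          = Finset.Icc 1 i \ Finset.image R (Finset.univ.erase ℓ₀) :=
        (Finset.sdiff_eq_filter _ _).symm
      have hcard : ((Finset.Icc 1 i).filter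
            (fun v => ¬ v ∈ Finset.image R (Finset.univ.erase ℓ₀))).card = i - s + 1 := by
        rw [hfilter, Finset.card_sdiff_of_subset hBsub, Nat.card_Icc,
          Finset.card_image_of_injective _ hinj,
          Finset.card_erase_of_mem (Finset.mem_univ _), Finset.card_univ, Fintype.card_fin]
        omega
      rw [hcard]
      congr 1
      push_cast [Nat.cast_sub hsi]
      ring
    rw [hmain, hws, hsub]
    push_cast [Nat.factorial_succ, hcast]
    field_simp
  · push_neg at hR
    have hmem' : ∀ ℓ, R ℓ ∈ Finset.Icc 1 i := by
      intro ℓ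
      have h1 := hmem ℓ
      have h2 := hR ℓ
      simp only [Finset.mem_Icc] at h1 ⊢
      omega
    rw [IH R hinj hmem']
    have hzero : ∀ ℓ₀ : Fin s,
        (∑ ω : RROmega s i, (if C ℓ₀ ω then RRdensity s i ω else 0)) = 0 := by
      intro ℓ₀
      apply Finset.sum_eq_zero
      intro ω _
      rw [if_neg]
      intro hc
      have hc' : (fun ℓ => if ℓ = ℓ₀ then i + 1 else RRchi s i ω ℓ) = R := hc
      have h1 := congrFun hc' ℓ₀
      rw [if_pos rfl] at h1
      exact hR ℓ₀ h1.symm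
    simp only [hzero, zero_mul, Finset.sum_const_zero, add_zero]
    rw [hwn, hsub]
    push_cast [Nat.factorial_succ, hcast]
    field_simp
    ring

end RRaux


/-- In reversed reservoir sampling, for `s ≤ i ≤ n`, the random
`s`-permutation `χ(A_i)` is uniform over all `s`-permutations of the `i` most
recent elements: any fixed `s`-permutation `R` of `X[-i:]` (an injective map
from slots to ages in `{1,…,i}`) occurs with probability `(i-s)!/i!`. -/
theorem RRchi_uniform (s i : ℕ) (hs : 1 ≤ s) (hsi : s ≤ i)
    (R : Fin s → ℕ) (hinj : Function.Injective R)
    (hmem : ∀ ℓ, R ℓ ∈ Finset.Icc 1 i) :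
    ∑ ω : RROmega s i, (if RRchi s i ω = R then RRdensity s i ω else 0)
      = (Nat.factorial (i - s) : ℝ) / (Nat.factorial i) := by

  induction i, hsi using Nat.le_induction generalizing R with
  | base => exact RRaux.base s hs R hinj hmem
  | succ i hsi IH => exact RRaux.step s i hs hsi (fun R' h1 h2 => IH R' h1 h2) R hinj hmem
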